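/- For every N ∈ {4, 6, 12} and every integer n with n ∈ {7, 8, 9, 11} or n ≥ 13: for all f₂, f₃ ∈ {6 + 6e/N : e ∈ ℤ, |e| ≤ N/2} ∩ ℤ, all f₄, f₅ ∈ {6 + 18e/N : e ∈ ℤ, |e| ≤ N/2} ∩ ℤ, and every f_∞ ∈ {6 + (12e/N)·(n+2)/n : e ∈ ℤ, |e| ≤ N/2} ∩ ℤ, the quantity (N/12)·(f_∞ − 12 − f₂ − f₃ − f₄ − f₅) is not a nonnegative integer. -/

import Mathlib

set_option maxHeartbeats 2000000 in
/-- Case 3 of the Kovacic algorithm, first stage. For each subcase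
N ∈ {4, 6, 12} and every n with n ∈ {7, 8, 9, 11} or n ≥ 13, no combination of exponents
f₁ = 12, f₂, f₃ ∈ {6 + 6e/N : |e| ≤ N/2} ∩ ℤ, f₄, f₅ ∈ {6 + 18e/N : |e| ≤ N/2} ∩ ℤ and
f_∞ ∈ {6 + (12e/N)(n+2)/n : |e| ≤ N/2} ∩ ℤ makes d = (N/12)(f_∞ − Σⱼ fⱼ) a nonnegative
integer. -/
theorem statement5 (N n : ℕ) (hN : N ∈ ({4, 6, 12} : Set ℕ))
    (hn : n ∈ ({7, 8, 9, 11} : Set ℕ) ∨ 13 ≤ n)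
    (f₂ f₃ f₄ f₅ finf : ℚ)
    (h2 : ∃ e : ℤ, 2 * |e| ≤ (N : ℤ) ∧ f₂ = 6 + 6 * (e : ℚ) / (N : ℚ))
    (h2z : ∃ z : ℤ, f₂ = (z : ℚ))
    (h3 : ∃ e : ℤ, 2 * |e| ≤ (N : ℤ) ∧ f₃ = 6 + 6 * (e : ℚ) / (N : ℚ))
    (h3z : ∃ z : ℤ, f₃ = (z : ℚ))
    (h4 : ∃ e : ℤ, 2 * |e| ≤ (N : ℤ) ∧ f₄ = 6 + 18 * (e : ℚ) / (N : ℚ))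
    (h4z : ∃ z : ℤ, f₄ = (z : ℚ))
    (h5 : ∃ e : ℤ, 2 * |e| ≤ (N : ℤ) ∧ f₅ = 6 + 18 * (e : ℚ) / (N : ℚ))
    (h5z : ∃ z : ℤ, f₅ = (z : ℚ))
    (hinf : ∃ e : ℤ, 2 * |e| ≤ (N : ℤ) ∧
      finf = 6 + (12 * (e : ℚ) / (N : ℚ)) * (((n : ℚ) + 2) / (n : ℚ)))
    (hinfz : ∃ z : ℤ, finf = (z : ℚ)) :
    ¬ ∃ m : ℕ, ((N : ℚ) / 12) * (finf - 12 - f₂ - f₃ - f₄ - f₅) = (m : ℚ) := by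
  rintro ⟨m, hm⟩
  obtain ⟨e2, he2, hf2⟩ := h2
  obtain ⟨e3, he3, hf3⟩ := h3
  obtain ⟨e4, he4, hf4⟩ := h4
  obtain ⟨e5, he5, hf5⟩ := h5
  obtain ⟨e, he, hfinf⟩ := hinf
  obtain ⟨z, hz⟩ := hinfz
  have hNv : N = 4 ∨ N = 6 ∨ N = 12 := by simpa using hN
  have hnv : 7 ≤ n ∧ n ≠ 10 ∧ n ≠ 12 := by
    rcases hn with h | h
    · simp only [Set.mem_insert_iff, Set.mem_singleton_iff] at h; omega
    · omega
  have hNpos : 0 < N := by omega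
  have hnpos : 0 < n := by omega
  have hNq : (0:ℚ) < (N:ℚ) := by exact_mod_cast hNpos
  have hnq : (0:ℚ) < (n:ℚ) := by exact_mod_cast hnpos
  -- integer equation for finf
  have hkey : (z:ℤ) * N * n = 6 * N * n + 12 * e * (n + 2) := by
    have h := hz.symm.trans hfinf
    have hq : (z:ℚ) * N * n = 6 * N * n + 12 * e * (n + 2) := by
      rw [h]; field_simp
    exact_mod_cast hq
  -- bounds on e
  have heb : -(N:ℤ) ≤ 2 * e ∧ 2 * e ≤ (N:ℤ) := by
    constructor
    · linarith [neg_abs_le e]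
    · linarith [le_abs_self e]
  have hzle : z ≤ 11 := by
    by_contra hzc
    push_neg at hzc
    have hz12 : 12 ≤ z := hzc
    set k : ℤ := z - 6 with hk
    have hkeq : k * N * n = 12 * e * (n + 2) := by
      rw [hk]; linear_combination hkey
    have hNz : (4:ℤ) ≤ (N:ℤ) := by rcases hNv with h|h|h <;> simp [h]
    have hnz : (7:ℤ) ≤ (n:ℤ) := by exact_mod_cast hnv.1
    have hk7 : k ≤ 7 := by
      by_contra hkc
      push_neg at hkc
      have h1 : 12 * e * ((n:ℤ) + 2) ≤ 6 * N * (n + 2) := by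
        nlinarith [mul_nonneg (by linarith [heb.2] : (0:ℤ) ≤ (N:ℤ) - 2*e) (by linarith : (0:ℤ) ≤ (n:ℤ) + 2)]
      have h2 : 8 * (N:ℤ) * n ≤ k * N * n := by
        nlinarith [mul_nonneg (mul_nonneg (by linarith : (0:ℤ) ≤ k - 8) (by linarith : (0:ℤ) ≤ (N:ℤ))) (by linarith : (0:ℤ) ≤ (n:ℤ))]
      nlinarith [mul_nonneg (by linarith : (0:ℤ) ≤ (N:ℤ)) (by linarith : (0:ℤ) ≤ (n:ℤ) - 7)]
    have hk6 : 6 ≤ k := by omega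
    obtain ⟨hel, heu⟩ : -6 ≤ e ∧ e ≤ 6 := by
      rcases hNv with h|h|h <;> (rw [h] at heb; push_cast at heb; omega)
    have hn10 : (n:ℤ) ≠ 10 := by exact_mod_cast (by exact_mod_cast hnv.2.1 : ¬ (n = 10))
    have hn12' : (n:ℤ) ≠ 12 := by exact_mod_cast (by exact_mod_cast hnv.2.2 : ¬ (n = 12))
    rcases hNv with h|h|h <;> rw [h] at hkeq <;> push_cast at hkeq <;>
      interval_cases k <;> interval_cases e <;> omega
  -- lower bounds on f₂..f₅
  have hb2 : (3:ℚ) ≤ f₂ := by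
    rw [hf2]
    have hc : -(N:ℚ) ≤ 2 * (e2:ℚ) := by exact_mod_cast (by linarith [neg_abs_le e2] : -(N:ℤ) ≤ 2 * e2)
    have : (-3:ℚ) ≤ 6 * (e2:ℚ) / N := by rw [le_div_iff₀ hNq]; linarith
    linarith
  have hb3 : (3:ℚ) ≤ f₃ := by
    rw [hf3]
    have hc : -(N:ℚ) ≤ 2 * (e3:ℚ) := by exact_mod_cast (by linarith [neg_abs_le e3] : -(N:ℤ) ≤ 2 * e3)
    have : (-3:ℚ) ≤ 6 * (e3:ℚ) / N := by rw [le_div_iff₀ hNq]; linarith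
    linarith
  have hb4 : (-3:ℚ) ≤ f₄ := by
    rw [hf4]
    have hc : -(N:ℚ) ≤ 2 * (e4:ℚ) := by exact_mod_cast (by linarith [neg_abs_le e4] : -(N:ℤ) ≤ 2 * e4)
    have : (-9:ℚ) ≤ 18 * (e4:ℚ) / N := by rw [le_div_iff₀ hNq]; linarith
    linarith
  have hb5 : (-3:ℚ) ≤ f₅ := by
    rw [hf5]
    have hc : -(N:ℚ) ≤ 2 * (e5:ℚ) := by exact_mod_cast (by linarith [neg_abs_le e5] : -(N:ℤ) ≤ 2 * e5)
    have : (-9:ℚ) ≤ 18 * (e5:ℚ) / N := by rw [le_div_iff₀ hNq]; linarith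
    linarith
  have hfinf11 : finf ≤ 11 := by rw [hz]; exact_mod_cast hzle
  have hd : finf - 12 - f₂ - f₃ - f₄ - f₅ ≤ -1 := by linarith
  have hm0 : (0:ℚ) ≤ (m:ℚ) := by positivity
  have hNd : (0:ℚ) < (N:ℚ)/12 := by positivity
  have := mul_le_mul_of_nonneg_left hd hNd.le
  linarith
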